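/- With I, J finite, μ a probability vector on I, c ∈ ℝ^{I×J}, f_j nondecreasing continuous, and φ symmetric, there exists a Cournot-Nash equilibrium, i.e., a nonnegative γ with row sums μ such that whenever γ_{ij} > 0, the cost c_{ij} + f_j(ν_j) + Σ_k φ_{kj} ν_k equals min_{j'} (c_{ij'} + f_{j'}(ν_{j'}) + Σ_k φ_{kj'} ν_k), where ν is the column-sum vector of γ. -/

import Mathlib

open Finset

theorem cournot_nash_exists
    {I J : Type*} [Fintype I] [Fintype J] [Nonempty J]
    (μ : I → ℝ) (hμ0 : ∀ i, 0 ≤ μ i) (hμ1 : ∑ i, μ i = 1)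
    (c : I → J → ℝ)
    (f : J → ℝ → ℝ) (hf_mono : ∀ j, Monotone (f j)) (hf_cont : ∀ j, Continuous (f j))
    (φ : J → J → ℝ) (hφ : ∀ k j, φ k j = φ j k) :
    ∃ γ : I → J → ℝ, (∀ i j, 0 ≤ γ i j) ∧ (∀ i, ∑ j, γ i j = μ i) ∧
      ∀ i j, 0 < γ i j →
        c i j + f j (∑ i', γ i' j) + ∑ k, φ k j * (∑ i', γ i' k) =
          Finset.univ.inf' Finset.univ_nonempty
            (fun j' => c i j' + f j' (∑ i', γ i' j') + ∑ k, φ k j' * (∑ i', γ i' k)) := by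
  classical
  -- primitive of f j
  set F : J → ℝ → ℝ := fun l x => ∫ t in (0:ℝ)..x, f l t with hFdef
  have hFderiv : ∀ l x, HasDerivAt (F l) (f l x) x := fun l x =>
    intervalIntegral.integral_hasDerivAt_right ((hf_cont l).intervalIntegrable _ _)
      ((hf_cont l).stronglyMeasurableAtFilter _ _) (hf_cont l).continuousAt
  have hFcont : ∀ l, Continuous (F l) := fun l =>
    continuous_iff_continuousAt.2 fun x => (hFderiv l x).continuousAt
  -- the potential
  set Φ : (I → J → ℝ) → ℝ := fun γ =>
    (∑ i, ∑ l, c i l * γ i l) + (∑ l, F l (∑ i, γ i l)) +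
      (1/2) * ∑ k, ∑ l, φ k l * (∑ i, γ i k) * (∑ i, γ i l) with hΦdef
  have hν_cont : ∀ l : J, Continuous (fun γ : I → J → ℝ => ∑ i, γ i l) := fun l =>
    continuous_finset_sum _ fun i _ => (continuous_apply l).comp (continuous_apply i)
  have hΦcont : Continuous Φ := by
    rw [hΦdef]
    refine Continuous.add (Continuous.add ?_ ?_) ?_
    · exact continuous_finset_sum _ fun i _ => continuous_finset_sum _ fun l _ =>
        continuous_const.mul ((continuous_apply l).comp (continuous_apply i))
    · exact continuous_finset_sum _ fun l _ => (hFcont l).comp (hν_cont l)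
    · exact continuous_const.mul (continuous_finset_sum _ fun k _ =>
        continuous_finset_sum _ fun l _ =>
          (continuous_const.mul (hν_cont k)).mul (hν_cont l))
  -- the constraint set
  set K : Set (I → J → ℝ) := {γ | (∀ i j, 0 ≤ γ i j) ∧ (∀ i, ∑ j, γ i j = μ i)} with hKdef
  have hKne : K.Nonempty := by
    obtain ⟨j₀⟩ := (inferInstance : Nonempty J)
    refine ⟨fun i l => if l = j₀ then μ i else 0, fun i l => ?_, fun i => ?_⟩
    · dsimp only; split <;> simp [hμ0 i]
    · simp
  have hKclosed : IsClosed K := by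
    have h1 : IsClosed {γ : I → J → ℝ | ∀ i j, 0 ≤ γ i j} := by
      have : {γ : I → J → ℝ | ∀ i j, 0 ≤ γ i j} = ⋂ i, ⋂ j, {γ | 0 ≤ γ i j} := by
        ext γ; simp
      rw [this]
      exact isClosed_iInter fun i => isClosed_iInter fun j =>
        isClosed_le continuous_const ((continuous_apply j).comp (continuous_apply i))
    have h2 : IsClosed {γ : I → J → ℝ | ∀ i, ∑ j, γ i j = μ i} := by
      have : {γ : I → J → ℝ | ∀ i, ∑ j, γ i j = μ i} = ⋂ i, {γ | ∑ j, γ i j = μ i} := by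
        ext γ; simp
      rw [this]
      exact isClosed_iInter fun i => isClosed_eq
        (continuous_finset_sum _ fun j _ => (continuous_apply j).comp (continuous_apply i))
        continuous_const
    exact h1.inter h2
  have hKcompact : IsCompact K := by
    have hbig : IsCompact (Set.univ.pi fun i : I => Set.univ.pi fun _ : J => Set.Icc 0 (μ i)) :=
      isCompact_univ_pi fun i => isCompact_univ_pi fun _ => isCompact_Icc
    refine hbig.of_isClosed_subset hKclosed ?_
    intro γ hγ
    rw [Set.mem_univ_pi]
    intro i
    rw [Set.mem_univ_pi]
    intro l
    refine ⟨hγ.1 i l, ?_⟩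
    calc γ i l ≤ ∑ j, γ i j := Finset.single_le_sum (fun j _ => hγ.1 i j) (mem_univ l)
      _ = μ i := hγ.2 i
  obtain ⟨γ, hγK, hmin⟩ := hKcompact.exists_isMinOn hKne hΦcont.continuousOn
  set ν : J → ℝ := fun l => ∑ i, γ i l with hνdef
  refine ⟨γ, hγK.1, hγK.2, ?_⟩
  intro i j hpos
  -- the key inequality
  have key : ∀ j' : J, c i j + f j (ν j) + ∑ k, φ k j * ν k
      ≤ c i j' + f j' (ν j') + ∑ k, φ k j' * ν k := by
    intro j'
    rcases eq_or_ne j' j with rfl | hne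
    · exact le_refl _
    -- perturbation direction
    set D : I → J → ℝ := fun i'' l =>
      if i'' = i then (if l = j' then 1 else 0) - (if l = j then 1 else 0) else 0 with hDdef
    have hDsum : ∀ l, (∑ i'', D i'' l) = (if l = j' then 1 else 0) - (if l = j then 1 else 0) := by
      intro l; simp [hDdef]
    have hDrow : ∀ i'', (∑ l, D i'' l) = 0 := by
      intro i''; by_cases h : i'' = i <;> simp [hDdef, h, Finset.sum_sub_distrib]
    -- the perturbed plan stays in K for small ε
    have hmem : ∀ ε ∈ Set.Icc (0:ℝ) (γ i j), (fun i'' l => γ i'' l + ε * D i'' l) ∈ K := by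
      intro ε hε
      constructor
      · intro i'' l
        show 0 ≤ γ i'' l + ε * D i'' l
        by_cases h1 : i'' = i
        · by_cases h2 : l = j
          · have hD : D i'' l = -1 := by
              simp [hDdef, h1, h2, hne.symm]
            rw [hD, h1, h2]
            have := hε.2; linarith
          · by_cases h3 : l = j'
            · have hD : D i'' l = 1 := by simp [hDdef, h1, h3, hne]
              rw [hD]
              have := hε.1; have := hγK.1 i'' l; linarith
            · have hD : D i'' l = 0 := by simp [hDdef, h1, h2, h3]
              rw [hD]; simpa using hγK.1 i'' l
        · have hD : D i'' l = 0 := by simp [hDdef, h1]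
          rw [hD]; simpa using hγK.1 i'' l
      · intro i''
        rw [Finset.sum_add_distrib, ← Finset.mul_sum, hDrow, mul_zero, add_zero]
        exact hγK.2 i''
    -- derivative of the perturbed potential
    set ψ : ℝ → ℝ := fun ε => Φ (fun i'' l => γ i'' l + ε * D i'' l) with hψdef
    have hinner : ∀ l, HasDerivAt (fun ε : ℝ => ∑ i'', (γ i'' l + ε * D i'' l))
        (∑ i'', D i'' l) 0 :=
      fun l => HasDerivAt.fun_sum fun i'' _ =>
        ((hasDerivAt_mul_const (D i'' l)).const_add (γ i'' l))
    have hψconv : ψ = fun ε : ℝ =>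
        (∑ i'', ∑ l, c i'' l * (γ i'' l + ε * D i'' l)) +
        (∑ l, F l (∑ i'', (γ i'' l + ε * D i'' l))) +
        (1/2) * ∑ k, ∑ l, φ k l * (∑ i'', (γ i'' k + ε * D i'' k)) *
          (∑ i'', (γ i'' l + ε * D i'' l)) := by
      funext ε; rw [hψdef, hΦdef]
    have hψd : HasDerivAt ψ
        ((∑ i'', ∑ l, c i'' l * D i'' l) +
         (∑ l, f l (ν l) * (∑ i'', D i'' l)) +
         (1/2) * ∑ k, ∑ l, (φ k l * (∑ i'', D i'' k) * (ν l) +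
            φ k l * (ν k) * (∑ i'', D i'' l))) 0 := by
      rw [hψconv]
      refine HasDerivAt.add (HasDerivAt.add ?_ ?_) ?_
      · exact HasDerivAt.fun_sum fun i'' _ => HasDerivAt.fun_sum fun l _ =>
          ((hasDerivAt_mul_const (D i'' l)).const_add (γ i'' l)).const_mul (c i'' l)
      · refine HasDerivAt.fun_sum fun l _ => ?_
        have h2 := (hFderiv l (∑ i'', (γ i'' l + (0:ℝ) * D i'' l))).comp (0:ℝ) (hinner l)
        simpa [Function.comp_def, hνdef] using h2
      · refine HasDerivAt.const_mul _ ?_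
        refine HasDerivAt.fun_sum fun k _ => HasDerivAt.fun_sum fun l _ => ?_
        have h := ((hinner k).const_mul (φ k l)).fun_mul (hinner l)
        simpa [hνdef] using h
    -- identify the derivative
    have hswap : ∀ b : J, (∑ l, φ b l * ν l) = ∑ l, φ l b * ν l :=
      fun b => Finset.sum_congr rfl fun l _ => by rw [hφ b l]
    have hderiv_eq :
        (∑ i'', ∑ l, c i'' l * D i'' l) +
         (∑ l, f l (ν l) * (∑ i'', D i'' l)) +
         (1/2) * ∑ k, ∑ l, (φ k l * (∑ i'', D i'' k) * (ν l) +
            φ k l * (ν k) * (∑ i'', D i'' l)) =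
        (c i j' + f j' (ν j') + ∑ k, φ k j' * ν k) -
        (c i j + f j (ν j) + ∑ k, φ k j * ν k) := by
      have h1 : (∑ i'', ∑ l, c i'' l * D i'' l) = c i j' - c i j := by
        have hterm : ∀ i'', (∑ l, c i'' l * D i'' l)
            = if i'' = i then c i'' j' - c i'' j else 0 := by
          intro i''
          by_cases h : i'' = i <;>
            simp [hDdef, h, mul_sub, mul_ite, Finset.sum_sub_distrib]
        simp [hterm]
      have h2 : (∑ l, f l (ν l) * (∑ i'', D i'' l)) = f j' (ν j') - f j (ν j) := by
        simp only [hDsum]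
        simp [mul_sub, mul_ite, Finset.sum_sub_distrib]
      have hS1 : (∑ k, ∑ l, φ k l * (∑ i'', D i'' k) * ν l)
          = (∑ k, φ k j' * ν k) - (∑ k, φ k j * ν k) := by
        calc (∑ k, ∑ l, φ k l * (∑ i'', D i'' k) * ν l)
            = ∑ k, (∑ i'', D i'' k) * ∑ l, φ k l * ν l := by
              refine Finset.sum_congr rfl fun k _ => ?_
              rw [Finset.mul_sum]
              exact Finset.sum_congr rfl fun l _ => by ring
          _ = (∑ l, φ j' l * ν l) - (∑ l, φ j l * ν l) := by
              simp only [hDsum]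
              simp [sub_mul, ite_mul, Finset.sum_sub_distrib]
          _ = (∑ k, φ k j' * ν k) - (∑ k, φ k j * ν k) := by
              rw [hswap j', hswap j]
      have hS2 : (∑ k, ∑ l, φ k l * ν k * (∑ i'', D i'' l))
          = (∑ k, φ k j' * ν k) - (∑ k, φ k j * ν k) := by
        simp only [hDsum]
        simp [mul_sub, mul_ite, Finset.sum_sub_distrib]
      have hsplit : (∑ k, ∑ l, (φ k l * (∑ i'', D i'' k) * (ν l) +
            φ k l * (ν k) * (∑ i'', D i'' l)))
          = (∑ k, ∑ l, φ k l * (∑ i'', D i'' k) * ν l)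
            + (∑ k, ∑ l, φ k l * ν k * (∑ i'', D i'' l)) := by
        simp [Finset.sum_add_distrib]
      rw [h1, h2, hsplit, hS1, hS2]; ring
    rw [hderiv_eq] at hψd
    -- minimality gives nonnegative right derivative
    have hψ0 : ψ 0 = Φ γ := by
      rw [hψdef]; exact congrArg Φ (by funext i'' l; simp)
    have hslope : ∀ ε ∈ Set.Ioc (0:ℝ) (γ i j), 0 ≤ (ψ ε - ψ 0) / ε := by
      intro ε hε
      have h1 : Φ γ ≤ Φ (fun i'' l => γ i'' l + ε * D i'' l) :=
        isMinOn_iff.mp hmin _ (hmem ε ⟨hε.1.le, hε.2⟩)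
      have h2 : ψ 0 ≤ ψ ε := by rw [hψ0, hψdef]; exact h1
      exact div_nonneg (by linarith) hε.1.le
    have hge : 0 ≤ (c i j' + f j' (ν j') + ∑ k, φ k j' * ν k) -
        (c i j + f j (ν j) + ∑ k, φ k j * ν k) := by
      have htend := hasDerivAt_iff_tendsto_slope.mp hψd
      have htend' : Filter.Tendsto (slope ψ 0) (nhdsWithin 0 (Set.Ioi 0))
          (nhds ((c i j' + f j' (ν j') + ∑ k, φ k j' * ν k) -
            (c i j + f j (ν j) + ∑ k, φ k j * ν k))) :=
        htend.mono_left (nhdsWithin_mono 0 (fun x hx => ne_of_gt hx))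
      refine ge_of_tendsto htend' ?_
      filter_upwards [Ioc_mem_nhdsGT_of_mem ⟨le_refl 0, hpos⟩] with ε hε
      have := hslope ε hε
      simpa [slope_def_field, div_eq_inv_mul] using this
    linarith
  -- conclude
  refine le_antisymm ?_ (Finset.inf'_le _ (mem_univ j))
  exact Finset.le_inf' _ _ fun j' _ => key j'
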